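/- Let S be a random vector in [−∞,0]^d with max_j S_j = 0 almost surely, let E be a unit exponential random variable independent of S, and put Y = E + S coordinatewise. Let T be a random vector in [−∞,∞)^d with max_j T_j finite almost surely such that T − max_j T_j is equal in distribution to S. Let U be a random vector in [−∞,∞)^d with 0 < E[e^{U_j}] < ∞ for every j ∈ D and 0 < E[e^{max_j U_j}] < ∞, such that the law of T satisfies P[T ∈ B] = E[1{U ∈ B} e^{max_j U_j}]/E[e^{max_j U_j}] for all Borel B. Then for every nonempty J ⊆ D: P[Y_j > −∞ iff j ∈ J] = P[S_j > −∞ iff j ∈ J] = P[T_j > −∞ iff j ∈ J] = E[e^{max_{j∈J} U_j} 1{U_j > −∞ iff j ∈ J}] / E[e^{max_{j∈D} U_j}]. -/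
import Mathlib


open MeasureTheory ProbabilityTheory
open scoped Classical

/-- `e^x` for `x ∈ [-∞,∞)`, with `e^{-∞} = 0`. -/
noncomputable def eexp (x : EReal) : ℝ := if x = ⊥ then 0 else Real.exp x.toReal

/-- the probabilities of a given pattern `J` of finite coordinates agree for
`Y = E + S`, the spectral vector `S`, the `T`-generator, and are expressed through the
`U`-generator by an exponential tilting. -/
theorem pattern_probabilities_eq {d : ℕ} [NeZero d]
    {Ω : Type*} [MeasurableSpace Ω] (P : Measure Ω) [IsProbabilityMeasure P]
    -- the spectral random vector S
    (S : Ω → Fin d → EReal) (hSmeas : Measurable S)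
    (hSle : ∀ ω j, S ω j ≤ 0)
    (hSmax : ∀ᵐ ω ∂P, (⨆ j, S ω j) = 0)
    -- a unit exponential random variable independent of S
    (Eexp : Ω → ℝ) (hEmeas : Measurable Eexp)
    (hElaw : Measure.map Eexp P = expMeasure 1)
    (hindep : IndepFun Eexp S P)
    -- Y = E + S coordinatewise
    (Y : Ω → Fin d → EReal) (hY : ∀ ω j, Y ω j = (Eexp ω : EReal) + S ω j)
    -- the T-generator
    (T : Ω → Fin d → EReal) (hTmeas : Measurable T)
    (hTtop : ∀ ω j, T ω j ≠ ⊤)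
    (hTmax : ∀ᵐ ω ∂P, ⊥ < ⨆ j, T ω j)
    (hTS : Measure.map (fun ω => fun j => T ω j - ⨆ i, T ω i) P = Measure.map S P)
    -- the U-generator
    (U : Ω → Fin d → EReal) (hUmeas : Measurable U)
    (hUtop : ∀ ω j, U ω j ≠ ⊤)
    (hUj_pos : ∀ j, 0 < ∫ ω, eexp (U ω j) ∂P)
    (hUj_int : ∀ j, Integrable (fun ω => eexp (U ω j)) P)
    (hUmax_pos : 0 < ∫ ω, eexp (⨆ j, U ω j) ∂P)
    (hUmax_int : Integrable (fun ω => eexp (⨆ j, U ω j)) P)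
    (hTU : ∀ B : Set (Fin d → EReal), MeasurableSet B →
      (P {ω | T ω ∈ B}).toReal =
        (∫ ω, (if U ω ∈ B then eexp (⨆ j, U ω j) else 0) ∂P) /
          ∫ ω, eexp (⨆ j, U ω j) ∂P)
    -- a nonempty set of indices J
    (J : Finset (Fin d)) (hJ : J.Nonempty) :
    P {ω | ∀ j, (Y ω j ≠ ⊥ ↔ j ∈ J)} = P {ω | ∀ j, (S ω j ≠ ⊥ ↔ j ∈ J)} ∧
    P {ω | ∀ j, (S ω j ≠ ⊥ ↔ j ∈ J)} = P {ω | ∀ j, (T ω j ≠ ⊥ ↔ j ∈ J)} ∧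
    (P {ω | ∀ j, (T ω j ≠ ⊥ ↔ j ∈ J)}).toReal =
      (∫ ω, (if ∀ j, (U ω j ≠ ⊥ ↔ j ∈ J) then eexp (⨆ j ∈ J, U ω j) else 0) ∂P) /
        ∫ ω, eexp (⨆ j, U ω j) ∂P := by
  set B : Set (Fin d → EReal) := {x | ∀ j, (x j ≠ ⊥ ↔ j ∈ J)} with hB_def
  -- B is measurable
  have hB : MeasurableSet B := by
    have hrw : B = ⋂ j, (fun x : Fin d → EReal => x j) ⁻¹'
        (if j ∈ J then ({⊥}ᶜ : Set EReal) else {⊥}) := by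
      ext x
      simp only [hB_def, Set.mem_setOf_eq, Set.mem_iInter, Set.mem_preimage]
      constructor
      · intro h j
        by_cases hj : j ∈ J
        · simp [hj, (h j).2 hj]
        · have := fun h' => hj ((h j).1 h')
          simp only [hj, if_false, Set.mem_singleton_iff]
          by_contra h'; exact this h'
      · intro h j
        by_cases hj : j ∈ J
        · have := h j; rw [if_pos hj] at this; simpa [hj] using this
        · have := h j; rw [if_neg hj] at this
          simp only [Set.mem_singleton_iff] at this; simp [hj, this]
    rw [hrw]
    refine MeasurableSet.iInter fun j => (measurable_pi_apply j) ?_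
    by_cases hj : j ∈ J
    · rw [if_pos hj]; exact (measurableSet_singleton _).compl
    · rw [if_neg hj]; exact measurableSet_singleton _
  -- Part 1: the Y-pattern set equals the S-pattern set
  have part1 : {ω | ∀ j, (Y ω j ≠ ⊥ ↔ j ∈ J)} = {ω | ∀ j, (S ω j ≠ ⊥ ↔ j ∈ J)} := by
    ext ω
    simp only [Set.mem_setOf_eq]
    have hiff : ∀ j, (Y ω j ≠ ⊥ ↔ S ω j ≠ ⊥) := by
      intro j
      rw [hY ω j]
      constructor
      · intro h h'; exact h (by rw [h']; exact EReal.add_bot _)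
      · intro h h'
        rcases EReal.add_eq_bot_iff.1 h' with h'' | h''
        · exact EReal.coe_ne_bot _ h''
        · exact h h''
    exact forall_congr' fun j => by rw [hiff j]
  -- the shifted map
  set f : Ω → Fin d → EReal := fun ω => fun j => T ω j - ⨆ i, T ω i with hf_def
  -- f is a.e.-measurable (else map f P = 0, contradicting hTS)
  have hfae : AEMeasurable f P := by
    by_contra h
    have h0 : Measure.map f P = 0 := Measure.map_of_not_aemeasurable h
    have h1 : Measure.map S P Set.univ = 1 := by
      rw [Measure.map_apply hSmeas MeasurableSet.univ]
      simp
    rw [← hTS, h0] at h1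
    simp at h1
  -- Part 2
  have part2 : P {ω | ∀ j, (S ω j ≠ ⊥ ↔ j ∈ J)} = P {ω | ∀ j, (T ω j ≠ ⊥ ↔ j ∈ J)} := by
    have e1 : P {ω | ∀ j, (S ω j ≠ ⊥ ↔ j ∈ J)} = Measure.map S P B := by
      rw [Measure.map_apply hSmeas hB]; rfl
    have e2 : Measure.map f P B = P (f ⁻¹' B) :=
      Measure.map_apply_of_aemeasurable hfae hB
    have e3 : P (f ⁻¹' B) = P {ω | ∀ j, (T ω j ≠ ⊥ ↔ j ∈ J)} := by
      refine measure_congr (Filter.eventuallyEq_set.2 ?_)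
      filter_upwards [hTmax] with ω hω
      have hMtop : (⨆ i, T ω i) ≠ ⊤ := by
        obtain ⟨i0, hi0⟩ := Finite.exists_max fun i => T ω i
        exact ne_top_of_le_ne_top (hTtop ω i0) (iSup_le hi0)
      have hMbot : (⨆ i, T ω i) ≠ ⊥ := hω.ne'
      have hco : (⨆ i, T ω i) = ((⨆ i, T ω i).toReal : EReal) :=
        (EReal.coe_toReal hMtop hMbot).symm
      have hsub : ∀ j, (T ω j - ⨆ i, T ω i = ⊥ ↔ T ω j = ⊥) := by
        intro j
        rw [hco, sub_eq_add_neg, ← EReal.coe_neg]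
        constructor
        · intro h
          rcases EReal.add_eq_bot_iff.1 h with h' | h'
          · exact h'
          · exact absurd h' (EReal.coe_ne_bot _)
        · intro h; rw [h]; exact EReal.bot_add _
      simp only [Set.mem_preimage, hB_def, Set.mem_setOf_eq, hf_def]
      refine forall_congr' fun j => ?_
      rw [ne_eq, ne_eq, hsub j]
    rw [e1, ← hTS, e2, e3]
  -- Part 3
  have part3 : (P {ω | ∀ j, (T ω j ≠ ⊥ ↔ j ∈ J)}).toReal =
      (∫ ω, (if ∀ j, (U ω j ≠ ⊥ ↔ j ∈ J) then eexp (⨆ j ∈ J, U ω j) else 0) ∂P) /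
        ∫ ω, eexp (⨆ j, U ω j) ∂P := by
    have := hTU B hB
    have hTset : {ω | T ω ∈ B} = {ω | ∀ j, (T ω j ≠ ⊥ ↔ j ∈ J)} := rfl
    rw [hTset] at this
    rw [this]
    congr 1
    refine integral_congr_ae (Filter.Eventually.of_forall fun ω => ?_)
    by_cases h : U ω ∈ B
    · have hmem : ∀ j, (U ω j ≠ ⊥ ↔ j ∈ J) := h
      dsimp only
      rw [if_pos h, if_pos hmem]
      have hsup : (⨆ j, U ω j) = ⨆ j ∈ J, U ω j := by
        apply le_antisymm
        · refine iSup_le fun j => ?_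
          by_cases hj : j ∈ J
          · exact le_iSup₂ (f := fun j (_ : j ∈ J) => U ω j) j hj
          · have : U ω j = ⊥ := by
              by_contra h'
              exact hj ((hmem j).1 h')
            rw [this]; exact bot_le
        · exact iSup₂_le fun j _ => le_iSup _ j
      rw [hsup]
    · have hmem : ¬ ∀ j, (U ω j ≠ ⊥ ↔ j ∈ J) := h
      dsimp only
      rw [if_neg h, if_neg hmem]
  exact ⟨by rw [part1], part2, part3⟩
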